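/- Define u : ℂ → ℂ by u(t) = C/t² for a fixed constant C ∈ ℂ. Then for all nonzero complex x, y, z with x + y + z = 0, the 3×3 determinant with rows (u(x), u′(x), 1), (u(y), u′(y), 1), (u(z), u′(z), 1) vanishes, where u′(t) = −2C/t³. -/

import Mathlib

theorem stmt_19 (C : ℂ) (u u' : ℂ → ℂ)
    (hu : ∀ t, u t = C / t ^ 2) (hu' : ∀ t, u' t = -2 * C / t ^ 3)
    (x y z : ℂ) (hx : x ≠ 0) (hy : y ≠ 0) (hz : z ≠ 0) (hsum : x + y + z = 0) :
    Matrix.det !![u x, u' x, 1; u y, u' y, 1; u z, u' z, 1] = 0 := by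
  have h3 : ((x * y * z) ^ 3 : ℂ) ≠ 0 :=
    pow_ne_zero _ (mul_ne_zero (mul_ne_zero hx hy) hz)
  have hD : Matrix.det !![u x, u' x, 1; u y, u' y, 1; u z, u' z, 1] =
      u x * u' y - u x * u' z - u' x * u y + u' x * u z + u y * u' z - u' y * u z := by
    simp [Matrix.det_fin_three, Matrix.vecHead, Matrix.vecTail]
  have e1 : C / x ^ 2 * (-2 * C / y ^ 3) = (-2 * C ^ 2 * x * z ^ 3) / ((x * y * z) ^ 3) := by
    rw [div_mul_div_comm, div_eq_div_iff
      (mul_ne_zero (pow_ne_zero _ hx) (pow_ne_zero _ hy)) h3]; ring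
  have e2 : C / x ^ 2 * (-2 * C / z ^ 3) = (-2 * C ^ 2 * x * y ^ 3) / ((x * y * z) ^ 3) := by
    rw [div_mul_div_comm, div_eq_div_iff
      (mul_ne_zero (pow_ne_zero _ hx) (pow_ne_zero _ hz)) h3]; ring
  have e3 : -2 * C / x ^ 3 * (C / y ^ 2) = (-2 * C ^ 2 * y * z ^ 3) / ((x * y * z) ^ 3) := by
    rw [div_mul_div_comm, div_eq_div_iff
      (mul_ne_zero (pow_ne_zero _ hx) (pow_ne_zero _ hy)) h3]; ring
  have e4 : -2 * C / x ^ 3 * (C / z ^ 2) = (-2 * C ^ 2 * z * y ^ 3) / ((x * y * z) ^ 3) := by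
    rw [div_mul_div_comm, div_eq_div_iff
      (mul_ne_zero (pow_ne_zero _ hx) (pow_ne_zero _ hz)) h3]; ring
  have e5 : C / y ^ 2 * (-2 * C / z ^ 3) = (-2 * C ^ 2 * y * x ^ 3) / ((x * y * z) ^ 3) := by
    rw [div_mul_div_comm, div_eq_div_iff
      (mul_ne_zero (pow_ne_zero _ hy) (pow_ne_zero _ hz)) h3]; ring
  have e6 : -2 * C / y ^ 3 * (C / z ^ 2) = (-2 * C ^ 2 * z * x ^ 3) / ((x * y * z) ^ 3) := by
    rw [div_mul_div_comm, div_eq_div_iff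
      (mul_ne_zero (pow_ne_zero _ hy) (pow_ne_zero _ hz)) h3]; ring
  rw [hD, hu x, hu y, hu z, hu' x, hu' y, hu' z, e1, e2, e3, e4, e5, e6]
  simp only [← add_div, div_sub_div_same]
  rw [div_eq_zero_iff]
  left
  linear_combination (2 * C ^ 2 * (y * z ^ 2 - y ^ 2 * z - x * z ^ 2 + x * y ^ 2 + x ^ 2 * z - x ^ 2 * y)) * hsum
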